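/- Let G be a connected finite simple graph and let X, Y ⊆ V(G) satisfy X ∪ Y = V(G), X ∩ Y = {v}, and no edge of G joins a vertex of X ∖ {v} to a vertex of Y ∖ {v}. Let S, T be disjoint nonempty vertex sets with (X ∖ Y) ∩ S ≠ ∅, X ∩ T = ∅, Y ∩ S ≠ ∅, and Y ∩ T ≠ ∅. Then for every natural number k, (G,S,T,k) is a yes-instance of Two-Sets Cut-Uncut if and only if (G[Y], (S ∖ X) ∪ {v}, T, k) is a yes-instance of Two-Sets Cut-Uncut. -/

import Mathlib

/-- The cut-set ∂(A): edges of `G` with exactly one endpoint in `A`. -/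
def cutSet {V : Type*} (G : SimpleGraph V) (A : Set V) : Set (Sym2 V) :=
  {e | e ∈ G.edgeSet ∧ ∃ x y, e = s(x, y) ∧ x ∈ A ∧ y ∉ A}

/-- `x` and `y` lie in the same connected component of the induced subgraph `G[A]`:
there is a walk from `x` to `y` all of whose vertices lie in `A`. -/
def ReachableIn {V : Type*} (G : SimpleGraph V) (A : Set V) (x y : V) : Prop :=
  ∃ wlk : G.Walk x y, ∀ u ∈ wlk.support, u ∈ A

/-- `(G,S,T,k)` is a yes-instance of Two-Sets Cut-Uncut. -/
def TwoSetsCutUncut {V : Type*} (G : SimpleGraph V) (S T : Set V) (k : ℕ) : Prop :=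
  ∃ A B : Set V, A ∪ B = Set.univ ∧ A ∩ B = ∅ ∧ S ⊆ A ∧ T ⊆ B ∧
    (∀ x ∈ S, ∀ y ∈ S, ReachableIn G A x y) ∧
    (∀ x ∈ T, ∀ y ∈ T, ReachableIn G B x y) ∧
    (cutSet G A).ncard ≤ k

section Aux
variable {V : Type*} {G : SimpleGraph V} {X Y : Set V} {v : V}

lemma RI.symm {A : Set V} {x y : V} (h : ReachableIn G A x y) : ReachableIn G A y x := by
  obtain ⟨w, hw⟩ := h
  exact ⟨w.reverse, by simpa using hw⟩

lemma RI.trans {A : Set V} {x y z : V} (h1 : ReachableIn G A x y) (h2 : ReachableIn G A y z) :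
    ReachableIn G A x z := by
  obtain ⟨w1, hw1⟩ := h1
  obtain ⟨w2, hw2⟩ := h2
  refine ⟨w1.append w2, fun u hu => ?_⟩
  rcases (SimpleGraph.Walk.mem_support_append_iff _ _).1 hu with h | h
  · exact hw1 u h
  · exact hw2 u h

/-- a walk from outside Y into Y passes through v -/
lemma crossV (hXY : X ∪ Y = Set.univ) (hvY : v ∈ Y)
    (hsep : ∀ x ∈ X \ {v}, ∀ y ∈ Y \ {v}, ¬ G.Adj x y)
    {a b : V} (w : G.Walk a b) (ha : a ∉ Y) (hb : b ∈ Y) : v ∈ w.support := by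
  induction w with
  | nil => exact absurd hb ha
  | @cons x c b h p ih =>
    by_cases hc : c ∈ Y
    · have hx : x ∈ X := by
        have := Set.mem_univ x; rw [← hXY] at this
        rcases this with h' | h'
        · exact h'
        · exact absurd h' ha
      have hxv : x ≠ v := fun he => ha (he ▸ hvY)
      by_cases hcv : c = v
      · subst hcv; simp
      · exact absurd h (hsep x ⟨hx, hxv⟩ c ⟨hc, hcv⟩)
    · simp only [SimpleGraph.Walk.support_cons, List.mem_cons]
      right; exact ih hc hb

/-- a walk within X to v can be chosen with support in X -/
lemma stayX (hXY : X ∪ Y = Set.univ) (hvX : v ∈ X) (hvY : v ∈ Y)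
    (hsep : ∀ x ∈ X \ {v}, ∀ y ∈ Y \ {v}, ¬ G.Adj x y) :
    ∀ {x b : V} (_ : G.Walk x b), x ∈ X → b = v →
      ∃ w' : G.Walk x b, ∀ u ∈ w'.support, u ∈ X := by
  intro x b w
  induction w with
  | nil => intro hx _; exact ⟨SimpleGraph.Walk.nil, by simpa using hx⟩
  | @cons x c d h p ih =>
    intro hx hb
    rcases eq_or_ne x v with hxv | hxv
    · exact ⟨SimpleGraph.Walk.nil.copy rfl (hxv.trans hb.symm), by simpa using hx⟩
    · have hc : c ∈ X := by
        by_cases hcY : c ∈ Y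
        · rcases eq_or_ne c v with rfl | hcv
          · exact hvX
          · exact absurd h (hsep x ⟨hx, hxv⟩ c ⟨hcY, hcv⟩)
        · have := Set.mem_univ c; rw [← hXY] at this
          rcases this with h' | h'
          · exact h'
          · exact absurd h' hcY
      obtain ⟨w', hw'⟩ := ih hc hb
      refine ⟨SimpleGraph.Walk.cons h w', fun u hu => ?_⟩
      rcases (by simpa using hu : u = x ∨ u ∈ w'.support) with rfl | hu
      · exact hx
      · exact hw' u hu

/-- walk between Y-vertices with support in A (v ∈ A) can be replaced by one in A ∩ Y -/
lemma surgery (hXY : X ∪ Y = Set.univ) (hvY : v ∈ Y)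
    (hsep : ∀ x ∈ X \ {v}, ∀ y ∈ Y \ {v}, ¬ G.Adj x y)
    {A : Set V} (hvA : v ∈ A) :
    ∀ (n : ℕ) {a b : V} (w : G.Walk a b), w.length ≤ n → a ∈ Y → b ∈ Y →
      (∀ u ∈ w.support, u ∈ A) →
      ∃ w' : G.Walk a b, ∀ u ∈ w'.support, u ∈ A ∩ Y := by
  classical
  intro n
  induction n with
  | zero =>
    intro a b w hl ha hb hw
    cases w with
    | nil => exact ⟨SimpleGraph.Walk.nil, by simp_all⟩
    | cons h p => simp at hl
  | succ n ih =>
    intro a b w hl ha hb hw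
    cases w with
    | nil => exact ⟨SimpleGraph.Walk.nil, by simp_all⟩
    | @cons _ c _ h p =>
      by_cases hc : c ∈ Y
      · have hp : ∀ u ∈ p.support, u ∈ A := fun u hu => hw u (by simp [hu])
        obtain ⟨w', hw'⟩ := ih p (by simpa using Nat.lt_succ_iff.mp (Nat.lt_of_lt_of_le (by simp) hl)) hc hb hp
        refine ⟨SimpleGraph.Walk.cons h w', fun u hu => ?_⟩
        rcases (by simpa using hu : u = a ∨ u ∈ w'.support) with rfl | hu
        · exact ⟨hw u (by simp), ha⟩
        · exact hw' u hu
      · -- a must equal v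
        have hav : a = v := by
          by_contra hav
          have hcX : c ∈ X := by
            have := Set.mem_univ c; rw [← hXY] at this
            rcases this with h' | h'; exact h'; exact absurd h' hc
          have hcv : c ≠ v := fun he => hc (he ▸ hvY)
          exact hsep c ⟨hcX, hcv⟩ a ⟨ha, hav⟩ h.symm
        have hvp : v ∈ p.support := crossV hXY hvY hsep p hc hb
        have hp : ∀ u ∈ (p.dropUntil v hvp).support, u ∈ A := fun u hu => by
          have h2 : u ∈ p.support := SimpleGraph.Walk.support_dropUntil_subset p hvp hu
          exact hw u (by simp [h2])
        have hlen : (p.dropUntil v hvp).length ≤ n := by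
          have h1 := SimpleGraph.Walk.length_dropUntil_le p hvp
          have h2 : p.length ≤ n := by simpa using Nat.lt_succ_iff.mp (Nat.lt_of_lt_of_le (by simp) hl)
          omega
        obtain ⟨w', hw'⟩ := ih (p.dropUntil v hvp) hlen hvY hb hp
        subst hav
        exact ⟨w', hw'⟩

/-- walk from a Y-vertex avoiding v stays in Y -/
lemma avoidV (hXY : X ∪ Y = Set.univ) (hvY : v ∈ Y)
    (hsep : ∀ x ∈ X \ {v}, ∀ y ∈ Y \ {v}, ¬ G.Adj x y)
    {B : Set V} (hvB : v ∉ B) :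
    ∀ {a b : V} (w : G.Walk a b), a ∈ Y → (∀ u ∈ w.support, u ∈ B) →
      ∀ u ∈ w.support, u ∈ Y := by
  intro a b w
  induction w with
  | nil => intro ha _ u hu; simp at hu; subst hu; exact ha
  | @cons x c _ h p ih =>
    intro hx hw u hu
    have hxv : x ≠ v := fun he => hvB (he ▸ hw x (by simp))
    have hc : c ∈ Y := by
      by_contra hc
      have hcX : c ∈ X := by
        have := Set.mem_univ c; rw [← hXY] at this
        rcases this with h' | h'; exact h'; exact absurd h' hc
      have hcv : c ≠ v := fun he => hc (he ▸ hvY)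
      exact hsep c ⟨hcX, hcv⟩ x ⟨hx, hxv⟩ h.symm
    rcases (by simpa using hu : u = x ∨ u ∈ p.support) with rfl | hu
    · exact hx
    · exact ih hc (fun u hu => hw u (by simp [hu])) u hu

/-- convert a G-walk with support in Y to a walk in the induced graph -/
lemma toInduceWalk :
    ∀ {a b : V} (w : G.Walk a b) (_ : ∀ u ∈ w.support, u ∈ Y) (ha : a ∈ Y) (hb : b ∈ Y),
      ∃ w' : (G.induce Y).Walk ⟨a, ha⟩ ⟨b, hb⟩, ∀ u ∈ w'.support, (u : V) ∈ w.support := by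
  intro a b w
  induction w with
  | nil => intro _ ha hb; exact ⟨SimpleGraph.Walk.nil, by simp⟩
  | @cons x c _ h p ih =>
    intro hw ha hb
    have hc : c ∈ Y := hw c (by simp)
    obtain ⟨w', hw'⟩ := ih (fun u hu => hw u (by simp [hu])) hc hb
    refine ⟨SimpleGraph.Walk.cons (by exact h : (G.induce Y).Adj ⟨x, ha⟩ ⟨c, hc⟩) w',
      fun u hu => ?_⟩
    rcases (show u = (⟨x, ha⟩ : Y) ∨ u ∈ w'.support from List.mem_cons.1 hu) with rfl | hu
    · simp
    · simp only [SimpleGraph.Walk.support_cons, List.mem_cons]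
      right; exact hw' u hu

def ιhom (G : SimpleGraph V) (Y : Set V) : G.induce Y →g G := ⟨Subtype.val, fun h => h⟩

lemma ofInduceWalk {a b : Y} (w : (G.induce Y).Walk a b) :
    ∃ w' : G.Walk a.val b.val, ∀ u ∈ w'.support, ∃ c ∈ w.support, (c : V) = u := by
  refine ⟨w.map (ιhom G Y), fun u hu => ?_⟩
  erw [SimpleGraph.Walk.support_map (ιhom G Y) w] at hu
  obtain ⟨c, hc, rfl⟩ := List.mem_map.1 hu
  exact ⟨c, hc, rfl⟩

end Aux

theorem stmt14 {V : Type*} [Fintype V] (G : SimpleGraph V) (hG : G.Connected)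
    (X Y : Set V) (v : V) (hXY : X ∪ Y = Set.univ) (hXYv : X ∩ Y = {v})
    (hsep : ∀ x ∈ X \ {v}, ∀ y ∈ Y \ {v}, ¬ G.Adj x y)
    (S T : Set V) (hS : S.Nonempty) (hT : T.Nonempty) (hST : Disjoint S T)
    (hXS : ((X \ Y) ∩ S).Nonempty) (hXT : X ∩ T = ∅)
    (hYS : (Y ∩ S).Nonempty) (hYT : (Y ∩ T).Nonempty) (k : ℕ) :
    TwoSetsCutUncut G S T k ↔
      TwoSetsCutUncut (G.induce Y)
        (Subtype.val ⁻¹' ((S \ X) ∪ {v})) (Subtype.val ⁻¹' T) k := by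
  classical
  have hv : v ∈ X ∩ Y := by rw [hXYv]; rfl
  have hvX := hv.1
  have hvY := hv.2
  have hmemX : ∀ u : V, u ∉ Y → u ∈ X := fun u hu => by
    have := Set.mem_univ u
    rw [← hXY] at this
    rcases this with h | h
    · exact h
    · exact absurd h hu
  have hmemY : ∀ u : V, u ∉ X → u ∈ Y := fun u hu => by
    have := Set.mem_univ u
    rw [← hXY] at this
    rcases this with h | h
    · exact absurd h hu
    · exact h
  have hTY : T ⊆ Y := fun t ht => by
    by_contra h
    have : t ∈ X ∩ T := ⟨hmemX t h, ht⟩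
    rw [hXT] at this
    exact this
  constructor
  · rintro ⟨A, B, hU, hI, hSA, hTB, hSc, hTc, hcut⟩
    obtain ⟨s1, hs1⟩ := hXS
    obtain ⟨s2, hs2⟩ := hYS
    obtain ⟨w, hw⟩ := hSc s1 hs1.2 s2 hs2.2
    have hvw : v ∈ w.support := crossV hXY hvY hsep w hs1.1.2 hs2.1
    have hvA : v ∈ A := hw v hvw
    have hAB : ∀ u, u ∈ A → u ∉ B := fun u hA hB => by
      have : u ∈ A ∩ B := ⟨hA, hB⟩
      rw [hI] at this
      exact this
    have hvs2 : ReachableIn G A v s2 :=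
      ⟨w.dropUntil v hvw, fun u hu => hw u (SimpleGraph.Walk.support_dropUntil_subset w hvw hu)⟩
    have key : ∀ y ∈ (S \ X) ∪ ({v} : Set V), ReachableIn G A y s2 := by
      rintro y (hy | hy)
      · exact hSc y hy.1 s2 hs2.2
      · rw [Set.mem_singleton_iff] at hy
        subst hy
        exact hvs2
    refine ⟨Subtype.val ⁻¹' A, Subtype.val ⁻¹' B, ?_, ?_, ?_, ?_, ?_, ?_, ?_⟩
    · rw [← Set.preimage_union, hU, Set.preimage_univ]
    · rw [← Set.preimage_inter, hI, Set.preimage_empty]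
    · intro u hu
      simp only [Set.mem_preimage, Set.mem_union, Set.mem_singleton_iff] at hu
      rcases hu with h | h
      · exact hSA h.1
      · show u.val ∈ A
        rw [h]
        exact hvA
    · intro u hu
      exact hTB hu
    · intro u1 h1 u2 h2
      have hr : ReachableIn G A u1.val u2.val := RI.trans (key u1.val h1) (RI.symm (key u2.val h2))
      obtain ⟨w0, hw0⟩ := hr
      obtain ⟨w1, hw1⟩ := surgery hXY hvY hsep hvA w0.length w0 le_rfl u1.2 u2.2 hw0
      obtain ⟨w2, hw2⟩ := toInduceWalk w1 (fun u hu => (hw1 u hu).2) u1.2 u2.2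
      exact ⟨w2, fun u hu => (hw1 u.val (hw2 u hu)).1⟩
    · intro u1 h1 u2 h2
      obtain ⟨w0, hw0⟩ := hTc u1.val h1 u2.val h2
      have hvB : v ∉ B := hAB v hvA
      have hYsup := avoidV hXY hvY hsep hvB w0 u1.2 hw0
      obtain ⟨w2, hw2⟩ := toInduceWalk w0 hYsup u1.2 u2.2
      exact ⟨w2, fun u hu => hw0 u.val (hw2 u hu)⟩
    · have hsub : Sym2.map Subtype.val '' cutSet (G.induce Y) (Subtype.val ⁻¹' A) ⊆ cutSet G A := by
        rintro e ⟨e', ⟨he'E, a, b, rfl, haA, hbA⟩, rfl⟩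
        have hadj : (G.induce Y).Adj a b := (SimpleGraph.mem_edgeSet _).1 he'E
        exact ⟨(SimpleGraph.mem_edgeSet _).2 (show G.Adj a.val b.val from hadj),
          a.val, b.val, rfl, haA, hbA⟩
      calc (cutSet (G.induce Y) (Subtype.val ⁻¹' A)).ncard
          = (Sym2.map Subtype.val '' cutSet (G.induce Y) (Subtype.val ⁻¹' A)).ncard :=
            (Set.ncard_image_of_injective _ (Sym2.map.injective Subtype.val_injective)).symm
        _ ≤ (cutSet G A).ncard := Set.ncard_le_ncard hsub (Set.toFinite _)
        _ ≤ k := hcut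
  · rintro ⟨A', B', hU, hI, hS', hT', hSc', hTc', hcut'⟩
    have hvA' : (⟨v, hvY⟩ : Y) ∈ A' := hS' (Or.inr rfl)
    refine ⟨X ∪ Subtype.val '' A', Subtype.val '' B', ?_, ?_, ?_, ?_, ?_, ?_, ?_⟩
    · apply Set.eq_univ_of_forall
      intro u
      by_cases hu : u ∈ X
      · exact Or.inl (Or.inl hu)
      · have huY : u ∈ Y := hmemY u hu
        have : (⟨u, huY⟩ : Y) ∈ A' ∪ B' := by rw [hU]; trivial
        rcases this with h | h
        · exact Or.inl (Or.inr ⟨⟨u, huY⟩, h, rfl⟩)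
        · exact Or.inr ⟨⟨u, huY⟩, h, rfl⟩
    · apply Set.eq_empty_iff_forall_notMem.2
      rintro u ⟨huA, b, hbB', rfl⟩
      rcases huA with h | ⟨a, haA', ha⟩
      · have hbv : b.val ∈ ({v} : Set V) := by rw [← hXYv]; exact ⟨h, b.2⟩
        have hb : b = ⟨v, hvY⟩ := Subtype.ext hbv
        have : (⟨v, hvY⟩ : Y) ∈ A' ∩ B' := ⟨hvA', hb ▸ hbB'⟩
        rw [hI] at this
        exact this
      · have hab : a = b := Subtype.ext ha
        have : a ∈ A' ∩ B' := ⟨haA', hab ▸ hbB'⟩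
        rw [hI] at this
        exact this
    · intro s hs
      by_cases hsX : s ∈ X
      · exact Or.inl hsX
      · have hsY : s ∈ Y := hmemY s hsX
        have : (⟨s, hsY⟩ : Y) ∈ A' := hS' (Or.inl ⟨hs, hsX⟩)
        exact Or.inr ⟨⟨s, hsY⟩, this, rfl⟩
    · intro t ht
      exact ⟨⟨t, hTY ht⟩, hT' ht, rfl⟩
    · have reachV : ∀ s ∈ S, ReachableIn G (X ∪ Subtype.val '' A') s v := by
        intro s hs
        by_cases hsX : s ∈ X
        · obtain ⟨w0⟩ := hG.preconnected s v
          obtain ⟨w1, hw1⟩ := stayX hXY hvX hvY hsep w0 hsX rfl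
          exact ⟨w1, fun u hu => Or.inl (hw1 u hu)⟩
        · have hsY : s ∈ Y := hmemY s hsX
          obtain ⟨w2, hw2⟩ := hSc' ⟨s, hsY⟩ (Or.inl ⟨hs, hsX⟩) ⟨v, hvY⟩ (Or.inr rfl)
          obtain ⟨w3, hw3⟩ := ofInduceWalk w2
          refine ⟨w3, fun u hu => ?_⟩
          obtain ⟨c, hc, rfl⟩ := hw3 u hu
          exact Or.inr ⟨c, hw2 c hc, rfl⟩
      intro s1 h1 s2 h2
      exact RI.trans (reachV s1 h1) (RI.symm (reachV s2 h2))
    · intro t1 h1 t2 h2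
      obtain ⟨w2, hw2⟩ := hTc' ⟨t1, hTY h1⟩ h1 ⟨t2, hTY h2⟩ h2
      obtain ⟨w3, hw3⟩ := ofInduceWalk w2
      refine ⟨w3, fun u hu => ?_⟩
      obtain ⟨c, hc, rfl⟩ := hw3 u hu
      exact ⟨c, hw2 c hc, rfl⟩
    · have hsub : cutSet G (X ∪ Subtype.val '' A') ⊆
          Sym2.map Subtype.val '' cutSet (G.induce Y) A' := by
        rintro e ⟨heE, x, y, rfl, hxA, hyA⟩
        have hadj : G.Adj x y := (SimpleGraph.mem_edgeSet _).1 heE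
        have hyY : y ∈ Y := hmemY y (fun h => hyA (Or.inl h))
        have hyv : y ≠ v := fun h => hyA (Or.inl (h ▸ hvX))
        have hxY : x ∈ Y := by
          by_contra hxY
          have hxX : x ∈ X := hmemX x hxY
          have hxv : x ≠ v := fun h => hxY (h ▸ hvY)
          exact hsep x ⟨hxX, hxv⟩ y ⟨hyY, hyv⟩ hadj
        have hxA' : (⟨x, hxY⟩ : Y) ∈ A' := by
          rcases hxA with h | ⟨a, haA', ha⟩
          · have hxv : x ∈ ({v} : Set V) := by rw [← hXYv]; exact ⟨h, hxY⟩
            have : (⟨x, hxY⟩ : Y) = ⟨v, hvY⟩ := Subtype.ext hxv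
            rw [this]
            exact hvA'
          · have : (⟨x, hxY⟩ : Y) = a := Subtype.ext ha.symm
            rw [this]
            exact haA'
        have hyB' : (⟨y, hyY⟩ : Y) ∉ A' := fun h => hyA (Or.inr ⟨_, h, rfl⟩)
        exact ⟨s(⟨x, hxY⟩, ⟨y, hyY⟩),
          ⟨(SimpleGraph.mem_edgeSet _).2 (show (G.induce Y).Adj ⟨x, hxY⟩ ⟨y, hyY⟩ from hadj),
            ⟨x, hxY⟩, ⟨y, hyY⟩, rfl, hxA', hyB'⟩, rfl⟩
      calc (cutSet G (X ∪ Subtype.val '' A')).ncard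
          ≤ (Sym2.map Subtype.val '' cutSet (G.induce Y) A').ncard :=
            Set.ncard_le_ncard hsub (Set.toFinite _)
        _ = (cutSet (G.induce Y) A').ncard :=
            Set.ncard_image_of_injective _ (Sym2.map.injective Subtype.val_injective)
        _ ≤ k := hcut'
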